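/- Let z < 1. Then for every M ∈ ℝ there exists a differentiable function u : ℝ → ℝ with u and its derivative u' square-integrable, ∫_ℝ u(x)² dx = 1, ∫_ℝ |x| u(x)² dx < ∞, and E_z[u] < M. Hence the energy E_z is not bounded below on this class and admits no global minimiser when z < 1. -/

import Mathlib

open MeasureTheory Real

noncomputable def gA (a b R x : ℝ) : ℝ := a * Real.exp (-x^2) + b * Real.exp (-(x-R)^2)
noncomputable def gA' (a b R x : ℝ) : ℝ :=
  a * (-2*x) * Real.exp (-x^2) + b * (-2*(x-R)) * Real.exp (-(x-R)^2)
noncomputable def uA (a b R x : ℝ) : ℝ := Real.sqrt (gA a b R x)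

lemma gA_pos {a b : ℝ} (ha : 0 < a) (hb : 0 < b) (R x : ℝ) : 0 < gA a b R x :=
  add_pos (mul_pos ha (exp_pos _)) (mul_pos hb (exp_pos _))

lemma hasDerivAt_gA (a b R x : ℝ) : HasDerivAt (gA a b R) (gA' a b R x) x := by
  have h1 : HasDerivAt (fun x : ℝ => Real.exp (-x^2)) ((-2*x) * Real.exp (-x^2)) x := by
    have := ((hasDerivAt_pow 2 x).neg).exp
    simpa [mul_comm] using this
  have h2 : HasDerivAt (fun x : ℝ => Real.exp (-(x-R)^2)) ((-2*(x-R)) * Real.exp (-(x-R)^2)) x := by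
    have hs : HasDerivAt (fun x : ℝ => x - R) 1 x := (hasDerivAt_id x).sub_const R
    have := (((hs.pow 2).neg).exp)
    simpa [mul_comm, mul_assoc] using this
  have h3 := ((h1.const_mul a).add (h2.const_mul b))
  have h4 : gA' a b R x = a * (-2 * x * rexp (-x ^ 2)) + b * (-2 * (x - R) * rexp (-(x - R) ^ 2)) := by
    simp only [gA']; ring
  rw [h4]; exact h3

lemma hasDerivAt_uA {a b : ℝ} (ha : 0 < a) (hb : 0 < b) (R x : ℝ) :
    HasDerivAt (uA a b R) (gA' a b R x / (2 * Real.sqrt (gA a b R x))) x :=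
  (hasDerivAt_gA a b R x).sqrt (gA_pos ha hb R x).ne'

lemma deriv_uA {a b : ℝ} (ha : 0 < a) (hb : 0 < b) (R x : ℝ) :
    deriv (uA a b R) x = gA' a b R x / (2 * Real.sqrt (gA a b R x)) :=
  (hasDerivAt_uA ha hb R x).deriv

lemma diff_uA {a b : ℝ} (ha : 0 < a) (hb : 0 < b) (R : ℝ) : Differentiable ℝ (uA a b R) :=
  fun x => (hasDerivAt_uA ha hb R x).differentiableAt

lemma cont_gA (a b R : ℝ) : Continuous (gA a b R) := by
  unfold gA; fun_prop

lemma cont_gA' (a b R : ℝ) : Continuous (gA' a b R) := by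
  unfold gA'; fun_prop

lemma cont_uA (a b R : ℝ) : Continuous (uA a b R) := by
  exact (cont_gA a b R).sqrt

lemma cont_deriv_uA {a b : ℝ} (ha : 0 < a) (hb : 0 < b) (R : ℝ) :
    Continuous (deriv (uA a b R)) := by
  have : deriv (uA a b R) = fun x => gA' a b R x / (2 * Real.sqrt (gA a b R x)) := by
    funext x; exact deriv_uA ha hb R x
  rw [this]
  apply (cont_gA' a b R).div
  · exact continuous_const.mul ((cont_gA a b R).sqrt)
  · intro x
    have := gA_pos ha hb R x
    positivity

lemma sq_uA {a b : ℝ} (ha : 0 < a) (hb : 0 < b) (R x : ℝ) : uA a b R x ^ 2 = gA a b R x :=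
  Real.sq_sqrt (gA_pos ha hb R x).le

lemma intG : Integrable (fun x : ℝ => Real.exp (-x^2)) := by
  simpa using integrable_exp_neg_mul_sq one_pos

lemma intGR (R : ℝ) : Integrable (fun x : ℝ => Real.exp (-(x-R)^2)) :=
  intG.comp_sub_right R

lemma int_xG : Integrable (fun x : ℝ => x * Real.exp (-x^2)) := by
  simpa using integrable_mul_exp_neg_mul_sq one_pos

lemma int_absG : Integrable (fun x : ℝ => |x| * Real.exp (-x^2)) := by
  have := int_xG.abs
  refine this.congr (Filter.Eventually.of_forall fun x => ?_)
  simp only [abs_mul, abs_of_pos (exp_pos _)]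

lemma int_sqG : Integrable (fun x : ℝ => x^2 * Real.exp (-x^2)) := by
  have := integrable_rpow_mul_exp_neg_mul_sq one_pos (s := 2) (by norm_num)
  simpa [Real.rpow_two] using this

lemma int_sqGR (R : ℝ) : Integrable (fun x : ℝ => (x-R)^2 * Real.exp (-(x-R)^2)) :=
  int_sqG.comp_sub_right R

lemma int_xGR (R : ℝ) : Integrable (fun x : ℝ => x * Real.exp (-(x-R)^2)) := by
  have h : Integrable (fun t : ℝ => (t + R) * Real.exp (-t^2)) := by
    have := int_xG.add (intG.const_mul R)
    exact this.congr (Filter.Eventually.of_forall fun x => by simp only [Pi.add_apply]; ring)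
  have := h.comp_sub_right R
  refine this.congr (Filter.Eventually.of_forall fun x => by ring)

lemma int_absGR (R : ℝ) : Integrable (fun x : ℝ => |x| * Real.exp (-(x-R)^2)) := by
  have h : Integrable (fun t : ℝ => |t + R| * Real.exp (-t^2)) := by
    refine Integrable.mono' ((int_absG).add (intG.const_mul |R|)) ?_
      (Filter.Eventually.of_forall fun t => ?_)
    · exact ((continuous_abs.comp (continuous_id.add continuous_const)).mul
        (Real.continuous_exp.comp (continuous_neg.comp (continuous_pow 2)))).aestronglyMeasurable
    · have h1 : |t + R| ≤ |t| + |R| := abs_add_le t R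
      have h2 : (0:ℝ) < Real.exp (-t^2) := exp_pos _
      rw [Real.norm_eq_abs, abs_mul, abs_abs, abs_of_pos h2]
      show _ ≤ |t| * Real.exp (-t^2) + |R| * Real.exp (-t^2)
      nlinarith
  have := h.comp_sub_right R
  exact this.congr (Filter.Eventually.of_forall fun x => by ring_nf)

lemma val_G : ∫ x : ℝ, Real.exp (-x^2) = Real.sqrt π := by
  simpa using integral_gaussian 1

lemma val_GR (R : ℝ) : ∫ x : ℝ, Real.exp (-(x-R)^2) = Real.sqrt π := by
  rw [integral_sub_right_eq_self (fun t => Real.exp (-t^2)) R]; exact val_G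

lemma val_xG : ∫ x : ℝ, x * Real.exp (-x^2) = 0 := by
  have h := integral_neg_eq_self (fun t : ℝ => t * Real.exp (-t^2)) (volume : Measure ℝ)
  simp only [neg_sq, neg_mul] at h
  rw [integral_neg] at h
  linarith

lemma val_xGR (R : ℝ) : ∫ x : ℝ, x * Real.exp (-(x-R)^2) = R * Real.sqrt π := by
  have h : (fun x : ℝ => x * Real.exp (-(x-R)^2))
      = fun x : ℝ => ((x - R) + R) * Real.exp (-(x-R)^2) := by funext x; ring_nf
  rw [h, integral_sub_right_eq_self (fun t => (t + R) * Real.exp (-t^2)) R]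
  have hsplit : (fun t : ℝ => (t + R) * Real.exp (-t^2))
      = fun t : ℝ => t * Real.exp (-t^2) + R * Real.exp (-t^2) := by funext t; ring
  rw [hsplit, integral_add int_xG (intG.const_mul R), val_xG, integral_const_mul, val_G]
  ring

lemma int_gA {a b : ℝ} (R : ℝ) : Integrable (gA a b R) := by
  unfold gA
  exact (intG.const_mul a).add ((intGR R).const_mul b)

lemma val_gA (a b R : ℝ) : ∫ x : ℝ, gA a b R x = (a + b) * Real.sqrt π := by
  unfold gA
  rw [integral_add ((intG).const_mul a) ((intGR R).const_mul b),
    integral_const_mul, integral_const_mul, val_G, val_GR]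
  ring

lemma memL2_uA {a b : ℝ} (ha : 0 < a) (hb : 0 < b) (R : ℝ) :
    MemLp (uA a b R) 2 (volume : Measure ℝ) := by
  rw [memLp_two_iff_integrable_sq (cont_uA a b R).aestronglyMeasurable]
  exact (int_gA R).congr (Filter.Eventually.of_forall fun x => (sq_uA ha hb R x).symm)

lemma derivsq_le {a b : ℝ} (ha : 0 < a) (hb : 0 < b) (R x : ℝ) :
    deriv (uA a b R) x ^ 2
      ≤ 2*a*x^2*Real.exp (-x^2) + 2*b*(x-R)^2*Real.exp (-(x-R)^2) := by
  rw [deriv_uA ha hb R x, div_pow, mul_pow, Real.sq_sqrt (gA_pos ha hb R x).le]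
  rw [div_le_iff₀ (by have := gA_pos ha hb R x; positivity)]
  unfold gA gA'
  have e1 : (0:ℝ) < Real.exp (-x^2) := exp_pos _
  have e2 : (0:ℝ) < Real.exp (-(x-R)^2) := exp_pos _
  nlinarith [sq_nonneg (x - (x-R)), sq_nonneg (x + (x-R)),
    mul_pos (mul_pos ha hb) (mul_pos e1 e2), sq_nonneg (a*x*Real.exp (-x^2) - b*(x-R)*Real.exp (-(x-R)^2)),
    mul_pos ha e1, mul_pos hb e2, sq_nonneg x, sq_nonneg (x-R)]

lemma int_hbound {a b : ℝ} (R : ℝ) :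
    Integrable (fun x : ℝ => 2*a*x^2*Real.exp (-x^2) + 2*b*(x-R)^2*Real.exp (-(x-R)^2)) := by
  have h1 := int_sqG.const_mul (2*a)
  have h2 := (int_sqGR R).const_mul (2*b)
  exact (h1.add h2).congr (Filter.Eventually.of_forall fun x => by simp only [Pi.add_apply]; ring)

lemma int_derivsq {a b : ℝ} (ha : 0 < a) (hb : 0 < b) (R : ℝ) :
    Integrable (fun x : ℝ => deriv (uA a b R) x ^ 2) := by
  refine Integrable.mono' (int_hbound (a := a) (b := b) R) ?_ (Filter.Eventually.of_forall fun x => ?_)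
  · exact ((cont_deriv_uA ha hb R).pow 2).aestronglyMeasurable
  · rw [Real.norm_eq_abs, abs_of_nonneg (sq_nonneg _)]
    exact derivsq_le ha hb R x

lemma memL2_deriv_uA {a b : ℝ} (ha : 0 < a) (hb : 0 < b) (R : ℝ) :
    MemLp (deriv (uA a b R)) 2 (volume : Measure ℝ) := by
  rw [memLp_two_iff_integrable_sq (cont_deriv_uA ha hb R).aestronglyMeasurable]
  exact int_derivsq ha hb R

lemma int_abs_gA {a b : ℝ} (R : ℝ) : Integrable (fun x : ℝ => |x| * gA a b R x) := by
  unfold gA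
  have h1 := int_absG.const_mul a
  have h2 := (int_absGR R).const_mul b
  exact (h1.add h2).congr (Filter.Eventually.of_forall fun x => by simp only [Pi.add_apply]; ring)
noncomputable def PP (z a b R : ℝ) (p : ℝ × ℝ) : ℝ :=
  (z * (|p.1| + |p.2|) - |p.1 - p.2|) * gA a b R p.1 * gA a b R p.2

noncomputable def AA (a b R : ℝ) (p : ℝ × ℝ) : ℝ :=
  (|p.1| * gA a b R p.1) * gA a b R p.2 + gA a b R p.1 * (|p.2| * gA a b R p.2)

noncomputable def BB (a b R : ℝ) (p : ℝ × ℝ) : ℝ :=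
  |p.1 - p.2| * gA a b R p.1 * gA a b R p.2

noncomputable def QQ (a b R : ℝ) (p : ℝ × ℝ) : ℝ :=
  a * b * (Real.exp (-p.1^2) * (p.2 * Real.exp (-(p.2-R)^2))
    - (p.1 * Real.exp (-p.1^2)) * Real.exp (-(p.2-R)^2)
    + (p.1 * Real.exp (-(p.1-R)^2)) * Real.exp (-p.2^2)
    - Real.exp (-(p.1-R)^2) * (p.2 * Real.exp (-p.2^2)))

lemma int_AA (a b R : ℝ) : Integrable (AA a b R) (volume.prod volume) :=
  ((int_abs_gA R).mul_prod (int_gA R)).add ((int_gA R).mul_prod (int_abs_gA R))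

lemma val_AA (a b R : ℝ) : ∫ p, AA a b R p ∂(volume.prod volume)
    = (∫ x : ℝ, |x| * gA a b R x) * ((a+b) * Real.sqrt π)
      + ((a+b) * Real.sqrt π) * (∫ x : ℝ, |x| * gA a b R x) := by
  unfold AA
  rw [integral_add ((int_abs_gA R).mul_prod (int_gA R)) ((int_gA R).mul_prod (int_abs_gA R)),
    integral_prod_mul (f := fun x : ℝ => |x| * gA a b R x) (g := gA a b R),
    integral_prod_mul (f := gA a b R) (g := fun x : ℝ => |x| * gA a b R x), val_gA]

lemma int_BB {a b : ℝ} (ha : 0 < a) (hb : 0 < b) (R : ℝ) :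
    Integrable (BB a b R) (volume.prod volume) := by
  refine Integrable.mono' (int_AA a b R) ?_ (Filter.Eventually.of_forall fun p => ?_)
  · exact (((continuous_abs.comp ((continuous_fst).sub continuous_snd)).mul
      ((cont_gA a b R).comp continuous_fst)).mul
      ((cont_gA a b R).comp continuous_snd)).aestronglyMeasurable
  · have h1 : |p.1 - p.2| ≤ |p.1| + |p.2| := abs_sub p.1 p.2
    have h2 : 0 ≤ gA a b R p.1 := (gA_pos ha hb R p.1).le
    have h3 : 0 ≤ gA a b R p.2 := (gA_pos ha hb R p.2).le
    rw [Real.norm_eq_abs, BB, abs_of_nonneg (by positivity)]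
    unfold AA
    nlinarith [mul_nonneg (mul_nonneg (sub_nonneg.2 h1) h2) h3]

lemma int_PP {a b : ℝ} (ha : 0 < a) (hb : 0 < b) (z R : ℝ) :
    Integrable (PP z a b R) (volume.prod volume) := by
  have h := ((int_AA a b R).const_mul z).sub (int_BB ha hb R)
  refine h.congr (Filter.Eventually.of_forall fun p => ?_)
  simp only [Pi.sub_apply, PP, AA, BB]
  ring

lemma val_PP_eq {a b : ℝ} (ha : 0 < a) (hb : 0 < b) (z R : ℝ) :
    ∫ p, PP z a b R p ∂(volume.prod volume)
    = z * (∫ p, AA a b R p ∂(volume.prod volume)) - ∫ p, BB a b R p ∂(volume.prod volume) := by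
  have h : PP z a b R = fun p => z * AA a b R p - BB a b R p := by
    funext p; simp only [PP, AA, BB]; ring
  rw [h, integral_sub ((int_AA a b R).const_mul z) (int_BB ha hb R), integral_const_mul]

section QQparts
variable (a b R : ℝ)

lemma hT1 : Integrable (fun p : ℝ × ℝ => Real.exp (-p.1^2) * (p.2 * Real.exp (-(p.2-R)^2)))
    (volume.prod volume) := intG.mul_prod (int_xGR R)
lemma hT2 : Integrable (fun p : ℝ × ℝ => (p.1 * Real.exp (-p.1^2)) * Real.exp (-(p.2-R)^2))
    (volume.prod volume) := int_xG.mul_prod (intGR R)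
lemma hT3 : Integrable (fun p : ℝ × ℝ => (p.1 * Real.exp (-(p.1-R)^2)) * Real.exp (-p.2^2))
    (volume.prod volume) := (int_xGR R).mul_prod intG
lemma hT4 : Integrable (fun p : ℝ × ℝ => Real.exp (-(p.1-R)^2) * (p.2 * Real.exp (-p.2^2)))
    (volume.prod volume) := (intGR R).mul_prod int_xG

lemma hT12 : Integrable (fun p : ℝ × ℝ => Real.exp (-p.1^2) * (p.2 * Real.exp (-(p.2-R)^2))
    - (p.1 * Real.exp (-p.1^2)) * Real.exp (-(p.2-R)^2)) (volume.prod volume) :=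
  (hT1 R).sub (hT2 R)

lemma hT123 : Integrable (fun p : ℝ × ℝ => Real.exp (-p.1^2) * (p.2 * Real.exp (-(p.2-R)^2))
    - (p.1 * Real.exp (-p.1^2)) * Real.exp (-(p.2-R)^2)
    + (p.1 * Real.exp (-(p.1-R)^2)) * Real.exp (-p.2^2)) (volume.prod volume) :=
  (hT12 R).add (hT3 R)

lemma int_QQ : Integrable (QQ a b R) (volume.prod volume) := by
  unfold QQ
  exact (((hT123 R).sub (hT4 R)).const_mul (a * b))

lemma val_QQ : ∫ p, QQ a b R p ∂(volume.prod volume) = 2 * a * b * π * R := by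
  unfold QQ
  rw [integral_const_mul, integral_sub (hT123 R) (hT4 R), integral_add (hT12 R) (hT3 R),
    integral_sub (hT1 R) (hT2 R),
    integral_prod_mul (f := fun x : ℝ => Real.exp (-x^2))
      (g := fun x : ℝ => x * Real.exp (-(x-R)^2)),
    integral_prod_mul (f := fun x : ℝ => x * Real.exp (-x^2))
      (g := fun x : ℝ => Real.exp (-(x-R)^2)),
    integral_prod_mul (f := fun x : ℝ => x * Real.exp (-(x-R)^2))
      (g := fun x : ℝ => Real.exp (-x^2)),
    integral_prod_mul (f := fun x : ℝ => Real.exp (-(x-R)^2))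
      (g := fun x : ℝ => x * Real.exp (-x^2)),
    val_G, val_GR, val_xG, val_xGR]
  have h : Real.sqrt π * Real.sqrt π = π := Real.mul_self_sqrt pi_pos.le
  linear_combination (2 * a * b * R) * h

end QQparts

lemma QQ_le_BB {a b : ℝ} (ha : 0 < a) (hb : 0 < b) (R : ℝ) (p : ℝ × ℝ) :
    QQ a b R p ≤ BB a b R p := by
  have h1 : p.2 - p.1 ≤ |p.1 - p.2| := by rw [abs_sub_comm]; exact le_abs_self _
  have h2 : p.1 - p.2 ≤ |p.1 - p.2| := le_abs_self _
  have h0 : 0 ≤ |p.1 - p.2| := abs_nonneg _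
  have e1 : (0:ℝ) < Real.exp (-p.1^2) := exp_pos _
  have e2 : (0:ℝ) < Real.exp (-p.2^2) := exp_pos _
  have f1 : (0:ℝ) < Real.exp (-(p.1-R)^2) := exp_pos _
  have f2 : (0:ℝ) < Real.exp (-(p.2-R)^2) := exp_pos _
  simp only [QQ, BB, gA]
  nlinarith [mul_nonneg (mul_nonneg (mul_nonneg (mul_nonneg ha.le hb.le) e1.le) f2.le)
      (sub_nonneg.2 h1),
    mul_nonneg (mul_nonneg (mul_nonneg (mul_nonneg ha.le hb.le) f1.le) e2.le)
      (sub_nonneg.2 h2),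
    mul_nonneg h0 (mul_nonneg (mul_nonneg (mul_pos ha ha).le e1.le) e2.le),
    mul_nonneg h0 (mul_nonneg (mul_nonneg (mul_pos hb hb).le f1.le) f2.le)]

lemma BB_ge {a b : ℝ} (ha : 0 < a) (hb : 0 < b) (R : ℝ) :
    2 * a * b * π * R ≤ ∫ p, BB a b R p ∂(volume.prod volume) := by
  rw [← val_QQ a b R]
  exact integral_mono (int_QQ a b R) (int_BB ha hb R) (QQ_le_BB ha hb R)

-- extra small lemmas for the assembly
lemma int_absG_shift (R : ℝ) : Integrable (fun t : ℝ => |t + R| * Real.exp (-t^2)) := by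
  refine Integrable.mono' ((int_absG).add (intG.const_mul |R|)) ?_
    (Filter.Eventually.of_forall fun t => ?_)
  · exact ((continuous_abs.comp (continuous_id.add continuous_const)).mul
      (Real.continuous_exp.comp (continuous_neg.comp (continuous_pow 2)))).aestronglyMeasurable
  · have h1 : |t + R| ≤ |t| + |R| := abs_add_le t R
    have h2 : (0:ℝ) < Real.exp (-t^2) := exp_pos _
    rw [Real.norm_eq_abs, abs_mul, abs_abs, abs_of_pos h2]
    show _ ≤ |t| * Real.exp (-t^2) + |R| * Real.exp (-t^2)
    nlinarith

lemma val_absGR_le (R : ℝ) (hR : 0 ≤ R) :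
    (∫ x : ℝ, |x| * Real.exp (-(x-R)^2))
      ≤ (∫ x : ℝ, |x| * Real.exp (-x^2)) + R * Real.sqrt π := by
  have h1 : (∫ x : ℝ, |x| * Real.exp (-(x-R)^2)) = ∫ t : ℝ, |t + R| * Real.exp (-t^2) := by
    rw [← integral_sub_right_eq_self (fun t : ℝ => |t + R| * Real.exp (-t^2)) R]
    congr 1; funext x; rw [sub_add_cancel]
  rw [h1]
  have h2 : (∫ t : ℝ, |t + R| * Real.exp (-t^2))
      ≤ ∫ t : ℝ, (|t| * Real.exp (-t^2) + R * Real.exp (-t^2)) := by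
    refine integral_mono (int_absG_shift R) (int_absG.add ((intG.const_mul R).congr
      (Filter.Eventually.of_forall fun t => rfl))) fun t => ?_
    have h1 : |t + R| ≤ |t| + |R| := abs_add_le t R
    have h2 : (0:ℝ) < Real.exp (-t^2) := exp_pos _
    have h3 : |R| = R := abs_of_nonneg hR
    show |t + R| * Real.exp (-t^2) ≤ |t| * Real.exp (-t^2) + R * Real.exp (-t^2)
    nlinarith
  calc (∫ t : ℝ, |t + R| * Real.exp (-t^2)) ≤ _ := h2
    _ = (∫ x : ℝ, |x| * Real.exp (-x^2)) + R * Real.sqrt π := by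
        rw [integral_add int_absG (intG.const_mul R), integral_const_mul, val_G]

lemma val_derivsq_le {a b : ℝ} (ha : 0 < a) (hb : 0 < b) (R : ℝ) :
    (∫ x : ℝ, deriv (uA a b R) x ^ 2)
      ≤ 2*(a+b) * (∫ x : ℝ, x^2 * Real.exp (-x^2)) := by
  have h1 : (∫ x : ℝ, deriv (uA a b R) x ^ 2)
      ≤ ∫ x : ℝ, (2*a*x^2*Real.exp (-x^2) + 2*b*(x-R)^2*Real.exp (-(x-R)^2)) :=
    integral_mono (int_derivsq ha hb R) (int_hbound R) (derivsq_le ha hb R)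
  have h2 : (∫ x : ℝ, (x-R)^2 * Real.exp (-(x-R)^2)) = ∫ x : ℝ, x^2 * Real.exp (-x^2) :=
    integral_sub_right_eq_self (fun t : ℝ => t^2 * Real.exp (-t^2)) R
  have h3 : (∫ x : ℝ, (2*a*x^2*Real.exp (-x^2) + 2*b*(x-R)^2*Real.exp (-(x-R)^2)))
      = 2*a*(∫ x : ℝ, x^2 * Real.exp (-x^2)) + 2*b*(∫ x : ℝ, (x-R)^2 * Real.exp (-(x-R)^2)) := by
    rw [integral_add ((int_sqG.const_mul (2*a)).congr (Filter.Eventually.of_forall fun x => by ring))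
      (((int_sqGR R).const_mul (2*b)).congr (Filter.Eventually.of_forall fun x => by ring))]
    rw [← integral_const_mul, ← integral_const_mul]
    congr 1
    · congr 1; funext x; ring
    · congr 1; funext x; ring
  rw [h3, h2] at h1
  linarith

theorem stmt_5 (z : ℝ) (hz : z < 1) (M : ℝ) :
    ∃ u : ℝ → ℝ, Differentiable ℝ u ∧ MemLp u 2 (volume : Measure ℝ) ∧
      MemLp (deriv u) 2 (volume : Measure ℝ) ∧
      (∫ x : ℝ, u x ^ 2) = 1 ∧
      Integrable (fun x : ℝ => |x| * u x ^ 2) ∧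
      (∫ x : ℝ, deriv u x ^ 2) +
        (1/2) * (∫ x : ℝ, ∫ y : ℝ, (z * (|x| + |y|) - |x - y|) * u x ^ 2 * u y ^ 2) < M := by
  have hπ : (0:ℝ) < Real.sqrt π := Real.sqrt_pos.2 pi_pos
  have hππ : Real.sqrt π * Real.sqrt π = π := Real.mul_self_sqrt pi_pos.le
  obtain ⟨w, hw⟩ : ∃ t : ℝ, t = max z 0 := ⟨_, rfl⟩
  have hw0 : 0 ≤ w := hw ▸ le_max_right _ _
  have hw1 : w < 1 := by rw [hw]; exact max_lt hz one_pos
  have hzw : z ≤ w := hw ▸ le_max_left _ _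
  obtain ⟨ε, hεdef⟩ : ∃ t : ℝ, t = (1 - w)/2 := ⟨_, rfl⟩
  have hε0 : 0 < ε := by rw [hεdef]; linarith
  have hε1 : ε < 1 := by rw [hεdef]; linarith
  obtain ⟨a, hadef⟩ : ∃ t : ℝ, t = (1 - ε)/Real.sqrt π := ⟨_, rfl⟩
  obtain ⟨b, hbdef⟩ : ∃ t : ℝ, t = ε/Real.sqrt π := ⟨_, rfl⟩
  have ha : 0 < a := hadef ▸ div_pos (by linarith) hπ
  have hb : 0 < b := hbdef ▸ div_pos hε0 hπ
  have hab : (a + b) * Real.sqrt π = 1 := by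
    rw [hadef, hbdef]; field_simp; ring
  have hbπ : b * Real.sqrt π = ε := by
    rw [hbdef]; exact div_mul_cancel₀ _ hπ.ne'
  have habπ : a * b * π = (1 - ε) * ε := by
    rw [hadef, hbdef]; field_simp; rw [Real.sq_sqrt pi_pos.le]
  obtain ⟨C1, hC1⟩ : ∃ t : ℝ, t = ∫ x : ℝ, |x| * Real.exp (-x^2) := ⟨_, rfl⟩
  obtain ⟨C2, hC2⟩ : ∃ t : ℝ, t = ∫ x : ℝ, x^2 * Real.exp (-x^2) := ⟨_, rfl⟩
  obtain ⟨D0, hD0⟩ : ∃ t : ℝ, t = 2*(a+b)*C2 + w*(a+b)*C1 := ⟨_, rfl⟩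
  obtain ⟨d, hd⟩ : ∃ t : ℝ, t = (1 - w)^2 := ⟨_, rfl⟩
  have hd0 : 0 < d := by rw [hd]; exact pow_pos (by linarith) 2
  obtain ⟨R, hR⟩ : ∃ t : ℝ, t = max 0 (4*(D0 - M + 1)/d) := ⟨_, rfl⟩
  have hR0 : 0 ≤ R := hR ▸ le_max_left _ _
  have hR1 : 4*(D0 - M + 1)/d ≤ R := hR ▸ le_max_right _ _
  refine ⟨uA a b R, diff_uA ha hb R, memL2_uA ha hb R, memL2_deriv_uA ha hb R, ?_, ?_, ?_⟩
  · simp only [sq_uA ha hb]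
    rw [val_gA]; exact hab
  · simp only [sq_uA ha hb]
    exact int_abs_gA R
  · obtain ⟨m1, hm1⟩ : ∃ t : ℝ, t = ∫ x : ℝ, |x| * gA a b R x := ⟨_, rfl⟩
    have hm1nn : 0 ≤ m1 := by
      rw [hm1]
      exact integral_nonneg fun x => mul_nonneg (abs_nonneg x) (gA_pos ha hb R x).le
    have hm1val : m1 = a * C1 + b * (∫ x : ℝ, |x| * Real.exp (-(x-R)^2)) := by
      rw [hm1, hC1]
      have h : (fun x : ℝ => |x| * gA a b R x)
          = fun x : ℝ => a * (|x| * Real.exp (-x^2)) + b * (|x| * Real.exp (-(x-R)^2)) := by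
        funext x; simp only [gA]; ring
      rw [h, integral_add (int_absG.const_mul a) ((int_absGR R).const_mul b),
        integral_const_mul, integral_const_mul]
    have hm1le : m1 ≤ (a+b) * C1 + b * R * Real.sqrt π := by
      have h := val_absGR_le R hR0
      rw [← hC1] at h
      have h2 := mul_le_mul_of_nonneg_left h hb.le
      rw [hm1val]
      nlinarith
    have hdouble : (∫ x : ℝ, ∫ y : ℝ,
        (z * (|x| + |y|) - |x - y|) * uA a b R x ^ 2 * uA a b R y ^ 2)
        = ∫ p, PP z a b R p ∂((volume : Measure ℝ).prod volume) := by
      simp only [sq_uA ha hb]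
      exact MeasureTheory.integral_integral (f := fun x y : ℝ =>
        (z * (|x| + |y|) - |x - y|) * gA a b R x * gA a b R y) (int_PP ha hb z R)
    have hAA : ∫ p, AA a b R p ∂((volume : Measure ℝ).prod volume) = 2 * m1 := by
      rw [val_AA, hab, ← hm1]; ring
    have hPPle : (∫ p, PP z a b R p ∂((volume : Measure ℝ).prod volume))
        ≤ w * (2 * m1) - 2*a*b*π*R := by
      rw [val_PP_eq ha hb z R, hAA]
      have h1 : z * (2*m1) ≤ w * (2*m1) :=
        mul_le_mul_of_nonneg_right hzw (by linarith)
      have h2 := BB_ge ha hb R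
      linarith
    have hK : (∫ x : ℝ, deriv (uA a b R) x ^ 2) ≤ 2*(a+b)*C2 := by
      rw [hC2]; exact val_derivsq_le ha hb R
    have key : w * (2 * m1) - 2*a*b*π*R ≤ 2*(w*(a+b)*C1) - R * d / 2 := by
      have h1 := mul_le_mul_of_nonneg_left hm1le hw0
      have h2 : w * ((a+b) * C1 + b * R * Real.sqrt π)
          = w*(a+b)*C1 + w * ε * R := by
        linear_combination (w * R) * hbπ
      have h3 : 2*a*b*π*R = 2*(1-ε)*ε*R := by linear_combination (2*R) * habπ
      have h4 : w*ε*R - (1-ε)*ε*R = -(d/4)*R := by rw [hεdef, hd]; ring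
      linarith
    have hRd : D0 - M + 1 ≤ R * d / 4 := by
      have h := mul_le_mul_of_nonneg_right hR1 hd0.le
      rw [div_mul_cancel₀ _ hd0.ne'] at h
      linarith
    rw [hdouble]
    have hE : (∫ x : ℝ, deriv (uA a b R) x ^ 2)
        + (1/2) * (∫ p, PP z a b R p ∂((volume : Measure ℝ).prod volume))
        ≤ D0 - R * d / 4 := by
      rw [hD0]
      linarith
    linarith
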